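/- (q-Vandermonde identity) Define, for natural numbers a, b, the Gaussian binomial coefficient as the polynomial B(a,b) = Σ_{K ⊆ {1,…,a}, |K| = b} q^{a(K)} ∈ ℤ[q], where a(K) = #{(i,j) : i ∈ K, j ∉ K, j < i}. Then for all natural numbers x, y, n one has B(x+y, n) = Σ_{k=0}^{n} q^{(x−k)(n−k)} · B(x,k) · B(y,n−k) in ℤ[q]. -/

import Mathlib

/-- The area statistic on subsets `K ⊆ {1,…,N}`:
`a(K) = #{(i,j) : i ∈ K, j ∉ K, j < i}`, where `i, j` range over `{1,…,N}`. -/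
def areaStat (N : ℕ) (K : Finset ℕ) : ℕ :=
  ((Finset.Icc 1 N ×ˢ Finset.Icc 1 N).filter
    fun p => p.1 ∈ K ∧ p.2 ∉ K ∧ p.2 < p.1).card

/-- The Gaussian binomial coefficient `[a choose b]_q ∈ ℤ[q]`, realized as the
generating polynomial of the area statistic on `b`-element subsets of `{1,…,a}`. -/
noncomputable def gaussBinom (a b : ℕ) : Polynomial ℤ :=
  ∑ K ∈ (Finset.Icc 1 a).powersetCard b, Polynomial.X ^ areaStat a K

open Finset Polynomial

lemma addx_inj (x : ℕ) : Function.Injective (· + x) :=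
  fun a b h => Nat.add_right_cancel h

lemma card_filter_prod (s t : Finset ℕ) (P : ℕ × ℕ → Prop) [DecidablePred P] :
    ((s ×ˢ t).filter P).card = ∑ i ∈ s, (t.filter fun j => P (i, j)).card := by
  rw [Finset.card_filter, Finset.sum_product]
  exact Finset.sum_congr rfl fun i _ => (Finset.card_filter _ _).symm

lemma areaStat_eq_sum (N : ℕ) (K : Finset ℕ) (hK : K ⊆ Finset.Icc 1 N) :
    areaStat N K = ∑ i ∈ K,
      ((Finset.Icc 1 N).filter fun j => j ∉ K ∧ j < i).card := by
  rw [areaStat, card_filter_prod]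
  rw [← Finset.sum_subset hK (fun i _ hiK => by
    simp only [hiK, false_and, Finset.filter_false, Finset.card_empty])]
  apply Finset.sum_congr rfl
  intro i hi
  congr 1
  apply Finset.filter_congr
  intro j _
  simp [hi]

lemma areaStat_union (x y : ℕ) (A B : Finset ℕ)
    (hA : A ⊆ Finset.Icc 1 x) (hB : B ⊆ Finset.Icc 1 y) :
    areaStat (x + y) (A ∪ B.image (· + x))
      = areaStat x A + areaStat y B + (x - A.card) * B.card := by
  set B' := B.image (· + x) with hB'
  have hBmem : ∀ j, j ∈ B' → x < j ∧ j ≤ x + y := by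
    intro j hj
    simp only [hB', Finset.mem_image] at hj
    obtain ⟨b, hb, rfl⟩ := hj
    have := Finset.mem_Icc.1 (hB hb)
    constructor <;> omega
  have hAmem : ∀ j, j ∈ A → 1 ≤ j ∧ j ≤ x := by
    intro j hj; exact Finset.mem_Icc.1 (hA hj)
  have hKsub : A ∪ B' ⊆ Finset.Icc 1 (x + y) := by
    intro j hj
    rcases Finset.mem_union.1 hj with h | h
    · have := hAmem j h; exact Finset.mem_Icc.2 ⟨this.1, by omega⟩
    · have := hBmem j h; exact Finset.mem_Icc.2 ⟨by omega, this.2⟩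
  have hdisj : Disjoint A B' := by
    rw [Finset.disjoint_left]
    intro j hjA hjB
    have := hAmem j hjA; have := hBmem j hjB; omega
  have hlow : ∀ j, j ≤ x → (j ∈ A ∪ B' ↔ j ∈ A) := by
    intro j hj
    simp only [Finset.mem_union]
    constructor
    · rintro (h | h)
      · exact h
      · exact absurd (hBmem j h).1 (by omega)
    · exact Or.inl
  rw [areaStat_eq_sum _ _ hKsub, Finset.sum_union hdisj]
  have h1 : ∀ i ∈ A, ((Finset.Icc 1 (x+y)).filter fun j => j ∉ A ∪ B' ∧ j < i).card
      = ((Finset.Icc 1 x).filter fun j => j ∉ A ∧ j < i).card := by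
    intro i hi
    have hix := (hAmem i hi).2
    congr 1
    apply Finset.ext
    intro j
    simp only [Finset.mem_filter, Finset.mem_Icc]
    constructor
    · rintro ⟨⟨h1, h2⟩, h3, h4⟩
      exact ⟨⟨h1, by omega⟩, fun hjA => h3 ((hlow j (by omega)).2 hjA), h4⟩
    · rintro ⟨⟨h1, h2⟩, h3, h4⟩
      exact ⟨⟨h1, by omega⟩, fun hjK => h3 ((hlow j h2).1 hjK), h4⟩
  rw [Finset.sum_congr rfl h1]
  have h2 : ∑ i ∈ B', ((Finset.Icc 1 (x+y)).filter fun j => j ∉ A ∪ B' ∧ j < i).card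
      = ∑ b ∈ B, ((Finset.Icc 1 x \ A).card
          + ((Finset.Icc 1 y).filter fun j => j ∉ B ∧ j < b).card) := by
    rw [hB', Finset.sum_image (fun a _ b _ h => addx_inj x h)]
    apply Finset.sum_congr rfl
    intro b hb
    have hby := Finset.mem_Icc.1 (hB hb)
    have hset : (Finset.Icc 1 (x+y)).filter (fun j => j ∉ A ∪ B' ∧ j < b + x)
        = (Finset.Icc 1 x \ A)
          ∪ ((Finset.Icc 1 y).filter fun j => j ∉ B ∧ j < b).image (· + x) := by
      apply Finset.ext
      intro j
      simp only [Finset.mem_filter, Finset.mem_Icc, Finset.mem_union, Finset.mem_sdiff,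
        Finset.mem_image]
      constructor
      · rintro ⟨⟨hj1, hj2⟩, hjK, hjlt⟩
        by_cases hjx : j ≤ x
        · left
          exact ⟨⟨hj1, hjx⟩, fun h => hjK (Finset.mem_union.1 ((hlow j hjx).2 h))⟩
        · right
          refine ⟨j - x, ⟨⟨by omega, by omega⟩, ?_, by omega⟩, by omega⟩
          intro hjB
          apply hjK
          refine Or.inr ?_
          rw [hB']
          exact Finset.mem_image.2 ⟨j - x, hjB, by omega⟩
      · rintro (⟨⟨hj1, hj2⟩, hjA⟩ | ⟨c, ⟨⟨hc1, hc2⟩, hcB, hclt⟩, rfl⟩)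
        · exact ⟨⟨hj1, by omega⟩, fun h => hjA ((hlow j hj2).1 (Finset.mem_union.2 h)), by omega⟩
        · refine ⟨⟨by omega, by omega⟩, ?_, by omega⟩
          intro h
          rcases h with h | h
          · exact absurd (hAmem _ h).2 (by omega)
          · rw [hB', Finset.mem_image] at h
            obtain ⟨c', hc', hcc⟩ := h
            have : c' = c := by omega
            exact hcB (this ▸ hc')
    rw [hset, Finset.card_union_of_disjoint, Finset.card_image_of_injective _ (addx_inj x)]
    rw [Finset.disjoint_left]
    intro j hj1 hj2
    have hj1' := Finset.mem_Icc.1 (Finset.mem_sdiff.1 hj1).1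
    rw [Finset.mem_image] at hj2
    obtain ⟨c, hc, rfl⟩ := hj2
    have := Finset.mem_Icc.1 (Finset.mem_filter.1 hc).1
    omega
  rw [h2, Finset.sum_add_distrib, Finset.sum_const, smul_eq_mul,
    areaStat_eq_sum x A hA, areaStat_eq_sum y B hB,
    Finset.card_sdiff_of_subset hA, Nat.card_Icc, Nat.add_sub_cancel]
  ring

lemma recomb (x y : ℕ) (K : Finset ℕ) (hKsub : K ⊆ Finset.Icc 1 (x + y)) :
    (K ∩ Finset.Icc 1 x) ∪ ((K.filter (x < ·)).image (· - x)).image (· + x) = K := by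
  have himg : ((K.filter (x < ·)).image (· - x)).image (· + x) = K.filter (x < ·) := by
    rw [Finset.image_image]
    rw [Finset.image_congr (g := id) (fun j hj => by
      simp only [Finset.mem_coe, Finset.mem_filter] at hj
      simp only [Function.comp, id]
      omega)]
    exact Finset.image_id
  rw [himg]
  apply Finset.ext
  intro j
  simp only [Finset.mem_union, Finset.mem_inter, Finset.mem_filter, Finset.mem_Icc]
  constructor
  · rintro (⟨hj, _⟩ | ⟨hj, _⟩) <;> exact hj
  · intro hj
    have := Finset.mem_Icc.1 (hKsub hj)
    by_cases hx : j ≤ x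
    · exact Or.inl ⟨hj, by omega, hx⟩
    · exact Or.inr ⟨hj, by omega⟩

/-- The `q`-Vandermonde identity:
`B(x+y, n) = Σ_{k=0}^{n} q^{(x−k)(n−k)} · B(x,k) · B(y,n−k)` in `ℤ[q]`. -/
theorem q_vandermonde (x y n : ℕ) :
    gaussBinom (x + y) n
      = ∑ k ∈ Finset.range (n + 1),
          Polynomial.X ^ ((x - k) * (n - k)) * gaussBinom x k * gaussBinom y (n - k) := by
  have hrw : ∀ k ∈ Finset.range (n + 1),
      Polynomial.X ^ ((x - k) * (n - k)) * gaussBinom x k * gaussBinom y (n - k)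
        = ∑ p ∈ (Finset.Icc 1 x).powersetCard k ×ˢ (Finset.Icc 1 y).powersetCard (n - k),
            (Polynomial.X : Polynomial ℤ)
              ^ ((x - k) * (n - k) + areaStat x p.1 + areaStat y p.2) := by
    intro k _
    rw [Finset.sum_product]
    simp only [gaussBinom, Finset.mul_sum, Finset.sum_mul, pow_add, mul_assoc]
    rw [Finset.sum_comm]
  rw [Finset.sum_congr rfl hrw,
    ← Finset.sum_sigma (Finset.range (n+1))
      (fun k => (Finset.Icc 1 x).powersetCard k ×ˢ (Finset.Icc 1 y).powersetCard (n - k))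
      (fun p => (Polynomial.X : Polynomial ℤ)
        ^ ((x - p.1) * (n - p.1) + areaStat x p.2.1 + areaStat y p.2.2))]
  rw [gaussBinom]
  apply Finset.sum_nbij'
    (i := fun K => ⟨(K ∩ Finset.Icc 1 x).card,
      (K ∩ Finset.Icc 1 x, (K.filter (x < ·)).image (· - x))⟩)
    (j := fun p => p.2.1 ∪ p.2.2.image (· + x))
  · -- maps into sigma set
    intro K hK
    simp only [Finset.mem_powersetCard] at hK
    obtain ⟨hKsub, hKcard⟩ := hK
    have hksub : K ∩ Finset.Icc 1 x ⊆ K := Finset.inter_subset_left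
    have hkle : (K ∩ Finset.Icc 1 x).card ≤ n := hKcard ▸ Finset.card_le_card hksub
    have hcards : (K ∩ Finset.Icc 1 x).card + (K.filter (x < ·)).card = n := by
      rw [show K ∩ Finset.Icc 1 x = K.filter (fun j => ¬ x < j) from ?_]
      · rw [add_comm]
        rw [Finset.card_filter_add_card_filter_not, hKcard]
      · apply Finset.ext
        intro j
        simp only [Finset.mem_inter, Finset.mem_filter, Finset.mem_Icc]
        constructor
        · rintro ⟨hj, h1, h2⟩; exact ⟨hj, by omega⟩
        · rintro ⟨hj, h⟩
          have := Finset.mem_Icc.1 (hKsub hj)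
          exact ⟨hj, by omega⟩
    simp only [Finset.mem_sigma, Finset.mem_range, Finset.mem_product,
      Finset.mem_powersetCard]
    refine ⟨by omega, ⟨Finset.inter_subset_right, trivial⟩, ?_, ?_⟩
    · intro b hb
      simp only [Finset.mem_image, Finset.mem_filter] at hb
      obtain ⟨j, ⟨hjK, hjx⟩, rfl⟩ := hb
      have := Finset.mem_Icc.1 (hKsub hjK)
      exact Finset.mem_Icc.2 ⟨by omega, by omega⟩
    · rw [Finset.card_image_of_injOn, ← hcards]
      · omega
      · intro a ha b hb h
        simp only [Finset.coe_filter, Set.mem_setOf_eq] at ha hb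
        have h' : a - x = b - x := h
        omega
  · -- maps back
    rintro ⟨k, A, B⟩ hp
    simp only [Finset.mem_sigma, Finset.mem_range, Finset.mem_product,
      Finset.mem_powersetCard] at hp
    obtain ⟨hk, ⟨hAsub, hAcard⟩, hBsub, hBcard⟩ := hp
    rw [Finset.mem_powersetCard]
    constructor
    · intro j hj
      rcases Finset.mem_union.1 hj with h | h
      · have := Finset.mem_Icc.1 (hAsub h)
        exact Finset.mem_Icc.2 ⟨this.1, by omega⟩
      · obtain ⟨b, hb, rfl⟩ := Finset.mem_image.1 h
        have := Finset.mem_Icc.1 (hBsub hb)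
        exact Finset.mem_Icc.2 ⟨by omega, by omega⟩
    · rw [Finset.card_union_of_disjoint, hAcard,
        Finset.card_image_of_injective _ (addx_inj x), hBcard]
      · omega
      · rw [Finset.disjoint_left]
        intro j hjA hjB
        have h1 := Finset.mem_Icc.1 (hAsub hjA)
        obtain ⟨b, hb, rfl⟩ := Finset.mem_image.1 hjB
        have := Finset.mem_Icc.1 (hBsub hb)
        omega
  · -- left inverse
    intro K hK
    simp only [Finset.mem_powersetCard] at hK
    exact recomb x y K hK.1
  · -- right inverse
    rintro ⟨k, A, B⟩ hp
    simp only [Finset.mem_sigma, Finset.mem_range, Finset.mem_product,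
      Finset.mem_powersetCard] at hp
    obtain ⟨hk, ⟨hAsub, hAcard⟩, hBsub, hBcard⟩ := hp
    have hAB : (A ∪ B.image (· + x)) ∩ Finset.Icc 1 x = A := by
      apply Finset.ext
      intro j
      simp only [Finset.mem_inter, Finset.mem_union, Finset.mem_image, Finset.mem_Icc]
      constructor
      · rintro ⟨h | ⟨b, hb, rfl⟩, hj⟩
        · exact h
        · have := Finset.mem_Icc.1 (hBsub hb)
          omega
      · intro h
        exact ⟨Or.inl h, Finset.mem_Icc.1 (hAsub h)⟩
    have hfil : (A ∪ B.image (· + x)).filter (x < ·) = B.image (· + x) := by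
      apply Finset.ext
      intro j
      simp only [Finset.mem_filter, Finset.mem_union, Finset.mem_image]
      constructor
      · rintro ⟨h | h, hj⟩
        · have := Finset.mem_Icc.1 (hAsub h)
          omega
        · exact h
      · rintro ⟨b, hb, rfl⟩
        have := Finset.mem_Icc.1 (hBsub hb)
        exact ⟨Or.inr ⟨b, hb, rfl⟩, by omega⟩
    have himg : (B.image (· + x)).image (· - x) = B := by
      rw [Finset.image_image]
      have : ((· - x) ∘ (· + x) : ℕ → ℕ) = id := by
        funext b; simp
      rw [this, Finset.image_id]
    simp only [hAB, hfil, himg, hAcard]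
  · -- values agree
    intro K hK
    simp only [Finset.mem_powersetCard] at hK
    obtain ⟨hKsub, hKcard⟩ := hK
    set A := K ∩ Finset.Icc 1 x with hA
    set B := (K.filter (x < ·)).image (· - x) with hB
    have hAsub : A ⊆ Finset.Icc 1 x := Finset.inter_subset_right
    have hBsub : B ⊆ Finset.Icc 1 y := by
      intro b hb
      simp only [hB, Finset.mem_image, Finset.mem_filter] at hb
      obtain ⟨j, ⟨hjK, hjx⟩, rfl⟩ := hb
      have := Finset.mem_Icc.1 (hKsub hjK)
      exact Finset.mem_Icc.2 ⟨by omega, by omega⟩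
    have hKeq : K = A ∪ B.image (· + x) := (recomb x y K hKsub).symm
    have hBcard : B.card = n - A.card := by
      have hinj : Set.InjOn (· - x) ↑(K.filter (x < ·)) := by
        intro a ha b hb h
        simp only [Finset.coe_filter, Set.mem_setOf_eq] at ha hb
        have h' : a - x = b - x := h
        omega
      have h1 : B.card = (K.filter (x < ·)).card := Finset.card_image_of_injOn hinj
      have h2 : A.card + (K.filter (x < ·)).card = n := by
        rw [show A = K.filter (fun j => ¬ x < j) from ?_]
        · rw [add_comm, Finset.card_filter_add_card_filter_not, hKcard]
        · apply Finset.ext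
          intro j
          simp only [hA, Finset.mem_inter, Finset.mem_filter, Finset.mem_Icc]
          constructor
          · rintro ⟨hj, h1, h2⟩; exact ⟨hj, by omega⟩
          · rintro ⟨hj, h⟩
            have := Finset.mem_Icc.1 (hKsub hj)
            exact ⟨hj, by omega⟩
      omega
    have := areaStat_union x y A B hAsub hBsub
    rw [← hKeq] at this
    rw [this, hBcard]
    congr 1
    ring
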